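/- Let A be a commutative ring, E an A-module, and I an ideal of A. The ideal I ⋉ IE of the trivial extension R = A ⋉ E is finitely generated as an ideal of R if and only if I is finitely generated as an ideal of A. -/
import Mathlib

open TrivSqZeroExt

/-- The ideal `I ⋉ IE` of `R = A ⋉ E` is finitely generated iff `I` is finitely generated. -/
theorem fg_ideal_trivSqZeroExt (A : Type*) [CommRing A] (E : Type*) [AddCommGroup E]
    [Module A E] [Module Aᵐᵒᵖ E] [IsCentralScalar A E] (I : Ideal A)
    (J : Ideal (TrivSqZeroExt A E))
    (hJ : ∀ x : TrivSqZeroExt A E,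
      x ∈ J ↔ x.fst ∈ I ∧ x.snd ∈ I • (⊤ : Submodule A E)) :
    J.FG ↔ I.FG := by
  constructor
  · intro h
    have hI : I = J.map (TrivSqZeroExt.fstHom A A E).toRingHom := by
      apply le_antisymm
      · intro a ha
        have : (TrivSqZeroExt.inl a : TrivSqZeroExt A E) ∈ J := by
          rw [hJ]
          exact ⟨by simpa using ha, by simp⟩
        simpa using Ideal.mem_map_of_mem (TrivSqZeroExt.fstHom A A E).toRingHom this
      · rw [Ideal.map_le_iff_le_comap]
        intro x hx
        exact ((hJ x).1 hx).1
    rw [hI]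
    exact Ideal.FG.map h _
  · intro h
    classical
    obtain ⟨s, hs⟩ := h
    refine ⟨s.image TrivSqZeroExt.inl, ?_⟩
    have haux : ∀ a ∈ I, (TrivSqZeroExt.inl a : TrivSqZeroExt A E) ∈
        Ideal.span ((s.image TrivSqZeroExt.inl : Finset (TrivSqZeroExt A E)) : Set _) := by
      intro a ha
      rw [← hs] at ha
      have := Ideal.mem_map_of_mem (TrivSqZeroExt.inlHom A E) ha
      rw [Ideal.map_span] at this
      simpa [Finset.coe_image, Set.image_image] using this
    apply le_antisymm (Ideal.span_le.mpr ?_)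
    · intro x hx
      obtain ⟨ha, he⟩ := (hJ x).1 hx
      rw [← TrivSqZeroExt.inl_fst_add_inr_snd_eq x]
      refine add_mem (haux _ ha) ?_
      refine Submodule.smul_induction_on he ?_ ?_
      · intro a ha m _
        have : (TrivSqZeroExt.inr (a • m) : TrivSqZeroExt A E) =
            TrivSqZeroExt.inl a * TrivSqZeroExt.inr m := by
          rw [TrivSqZeroExt.inl_mul_inr]
        rw [this]
        exact Ideal.mul_mem_right _ _ (haux a ha)
      · intro x y hx hy
        rw [TrivSqZeroExt.inr_add]
        exact add_mem hx hy
    · intro x hx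
      simp only [Finset.coe_image, Set.mem_image] at hx
      obtain ⟨a, has, rfl⟩ := hx
      rw [SetLike.mem_coe, hJ]
      refine ⟨by simpa using hs ▸ Ideal.subset_span has, by simp⟩
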